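/- arXiv:2510.19521 — 2 statements merged into one kernel-verified Lean document; each statement's English description precedes it below -/
import Mathlib

section
/- Define η(d, h) = a(h)·(1 − P_los(d)) + b(h)·P_los(d) where a(h) = 4.32 − 0.76·log₁₀(h), b(h) = 2.225 − 0.05·log₁₀(h), P_los(d) = (1 − d₁/d)·exp(−d/p₁) + d₁/d for d > d₁, with h ∈ [20,120], d₁ > 0, p₁ > 0. Then ∂η/∂d ≥ 0, i.e., η is monotonically nondecreasing in d for d > d₁. -/
theorem eta_monotone_in_distance (h d₁ p₁ : ℝ) (hh1 : 20 ≤ h) (hh2 : h ≤ 120)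
    (hd₁ : 0 < d₁) (hp₁ : 0 < p₁) :
    MonotoneOn (fun d : ℝ =>
      (4.32 - 0.76 * Real.logb 10 h) * (1 - ((1 - d₁ / d) * Real.exp (-d / p₁) + d₁ / d))
        + (2.225 - 0.05 * Real.logb 10 h) * ((1 - d₁ / d) * Real.exp (-d / p₁) + d₁ / d))
      (Set.Ioi d₁) := by
  have hlog2 : (0:ℝ) < Real.log 2 := Real.log_pos (by norm_num)
  have hL : Real.logb 10 h ≤ 7/3 := by
    have hlh : Real.log h ≤ 7 * Real.log 2 := by
      have h1 : Real.log h ≤ Real.log 128 := by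
        apply Real.log_le_log (by linarith) (by linarith)
      have h2 : Real.log (128:ℝ) = 7 * Real.log 2 := by
        rw [show (128:ℝ) = 2^7 by norm_num, Real.log_pow]; push_cast; ring
      linarith
    have hl10 : 3 * Real.log 2 ≤ Real.log 10 := by
      have h2 : Real.log (8:ℝ) = 3 * Real.log 2 := by
        rw [show (8:ℝ) = 2^3 by norm_num, Real.log_pow]; push_cast; ring
      have h1 : Real.log (8:ℝ) ≤ Real.log 10 := by
        apply Real.log_le_log (by norm_num) (by norm_num)
      linarith
    have h10 : (0:ℝ) < Real.log 10 := Real.log_pos (by norm_num)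
    rw [Real.logb, div_le_iff₀ h10]
    nlinarith
  have hab : 2.225 - 0.05 * Real.logb 10 h ≤ 4.32 - 0.76 * Real.logb 10 h := by
    have hL0 : 0 ≤ Real.logb 10 h := Real.logb_nonneg (by norm_num) (by linarith)
    nlinarith
  set a := (4.32 - 0.76 * Real.logb 10 h) with ha
  set b := (2.225 - 0.05 * Real.logb 10 h) with hb
  have key : ∀ x ∈ Set.Ioi d₁, HasDerivAt (fun d : ℝ =>
      a * (1 - ((1 - d₁ / d) * Real.exp (-d / p₁) + d₁ / d))
        + b * ((1 - d₁ / d) * Real.exp (-d / p₁) + d₁ / d))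
      (a * (0 - ((0 - d₁ * (-(x^2)⁻¹)) * Real.exp (-x / p₁)
          + (1 - d₁ / x) * (Real.exp (-x / p₁) * (-1 / p₁)) + d₁ * (-(x^2)⁻¹)))
        + b * ((0 - d₁ * (-(x^2)⁻¹)) * Real.exp (-x / p₁)
          + (1 - d₁ / x) * (Real.exp (-x / p₁) * (-1 / p₁)) + d₁ * (-(x^2)⁻¹))) x := by
    intro x hx
    have hx0 : 0 < x := lt_trans hd₁ hx
    have hu : HasDerivAt (fun d : ℝ => d₁ / d) (d₁ * (-(x^2)⁻¹)) x := by
      simpa [div_eq_mul_inv] using (hasDerivAt_inv hx0.ne').const_mul d₁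
    have he : HasDerivAt (fun d : ℝ => Real.exp (-d / p₁))
        (Real.exp (-x / p₁) * (-1 / p₁)) x := by
      have h1 : HasDerivAt (fun d : ℝ => -d / p₁) (-1 / p₁) x := by
        simpa using ((hasDerivAt_id x).neg.div_const p₁)
      exact h1.exp
    have hf : HasDerivAt (fun d : ℝ => (1 - d₁ / d) * Real.exp (-d / p₁) + d₁ / d)
        ((0 - d₁ * (-(x^2)⁻¹)) * Real.exp (-x / p₁)
          + (1 - d₁ / x) * (Real.exp (-x / p₁) * (-1 / p₁)) + d₁ * (-(x^2)⁻¹)) x :=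
      (((hasDerivAt_const x (1:ℝ)).sub hu).mul he).add hu
    exact (((hasDerivAt_const x (1:ℝ)).sub hf).const_mul a).add (hf.const_mul b)
  apply monotoneOn_of_deriv_nonneg (convex_Ioi d₁)
  · exact fun x hx => (key x hx).differentiableAt.continuousAt.continuousWithinAt
  · rw [interior_Ioi]
    exact fun x hx => (key x hx).differentiableAt.differentiableWithinAt
  · intro x hx
    rw [interior_Ioi] at hx
    rw [(key x hx).deriv]
    have hx0 : 0 < x := lt_trans hd₁ hx
    have hdx : d₁ < x := hx
    have hE0 : 0 < Real.exp (-x / p₁) := Real.exp_pos _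
    have hE1 : Real.exp (-x / p₁) ≤ 1 := by
      rw [← Real.exp_zero]
      apply Real.exp_le_exp.mpr
      have h1 : 0 < x / p₁ := div_pos hx0 hp₁
      rw [neg_div]
      linarith
    have hxsq : (0:ℝ) < x^2 := by positivity
    have hd1x : d₁ / x < 1 := (div_lt_one hx0).mpr hdx
    have hfd : (0 - d₁ * (-(x^2)⁻¹)) * Real.exp (-x / p₁)
        + (1 - d₁ / x) * (Real.exp (-x / p₁) * (-1 / p₁)) + d₁ * (-(x^2)⁻¹) ≤ 0 := by
      have h1 : (0 - d₁ * (-(x^2)⁻¹)) * Real.exp (-x / p₁) + d₁ * (-(x^2)⁻¹)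
          = (d₁ * (x^2)⁻¹) * (Real.exp (-x / p₁) - 1) := by ring
      have h2 : (d₁ * (x^2)⁻¹) * (Real.exp (-x / p₁) - 1) ≤ 0 := by
        apply mul_nonpos_of_nonneg_of_nonpos
        · positivity
        · linarith
      have h3 : (1 - d₁ / x) * (Real.exp (-x / p₁) * (-1 / p₁)) ≤ 0 := by
        apply mul_nonpos_of_nonneg_of_nonpos
        · linarith
        · apply mul_nonpos_of_nonneg_of_nonpos hE0.le
          rw [neg_div]
          have := div_pos (by norm_num : (0:ℝ) < 1) hp₁
          linarith
      nlinarith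
    nlinarith [hfd, hab]
end

section
/- Define η(d, h) as the A2 region composite path-loss exponent as above. Then ∂²η/∂d² ≤ 0 for d > d₁, i.e., η is concave in d on (d₁, ∞). -/
open Real Set Filter

private lemma aux_P_deriv (d₁ p₁ : ℝ) (hp₁ : 0 < p₁) {x : ℝ} (hx : x ≠ 0) :
    HasDerivAt (fun d : ℝ => (1 - d₁ / d) * Real.exp (-d / p₁) + d₁ / d)
      (d₁ / x ^ 2 * Real.exp (-x / p₁) - (1 - d₁ / x) * Real.exp (-x / p₁) / p₁ - d₁ / x ^ 2)
      x := by
  have h1 : HasDerivAt (fun d : ℝ => d₁ / d) (d₁ * (-(x ^ 2)⁻¹)) x := by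
    simpa [div_eq_mul_inv] using (hasDerivAt_inv hx).const_mul d₁
  have h2 : HasDerivAt (fun d : ℝ => 1 - d₁ / d) (-(d₁ * (-(x ^ 2)⁻¹))) x := h1.const_sub 1
  have h3 : HasDerivAt (fun d : ℝ => Real.exp (-d / p₁)) (Real.exp (-x / p₁) * (-1 / p₁)) x := by
    have := (((hasDerivAt_id x).neg).div_const p₁).exp
    simpa using this
  have := (h2.mul h3).add h1
  refine HasDerivAt.congr_deriv this ?_
  field_simp
  ring

private lemma aux_P1_deriv (d₁ p₁ : ℝ) (hp₁ : 0 < p₁) {x : ℝ} (hx : x ≠ 0) :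
    HasDerivAt (fun y : ℝ => d₁ / y ^ 2 * Real.exp (-y / p₁) - (1 - d₁ / y) * Real.exp (-y / p₁) / p₁ - d₁ / y ^ 2)
      (-2 * d₁ / x ^ 3 * Real.exp (-x / p₁) - 2 * d₁ / (x ^ 2 * p₁) * Real.exp (-x / p₁)
        + (1 - d₁ / x) * Real.exp (-x / p₁) / p₁ ^ 2 + 2 * d₁ / x ^ 3) x := by
  have hx2 : (x : ℝ) ^ 2 ≠ 0 := pow_ne_zero 2 hx
  have hq : HasDerivAt (fun y : ℝ => d₁ / y ^ 2) (d₁ * (-(↑2 * x ^ (2 - 1)) / (x ^ 2) ^ 2)) x := by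
    simpa [div_eq_mul_inv] using ((hasDerivAt_pow 2 x).inv hx2).const_mul d₁
  have h1 : HasDerivAt (fun d : ℝ => d₁ / d) (d₁ * (-(x ^ 2)⁻¹)) x := by
    simpa [div_eq_mul_inv] using (hasDerivAt_inv hx).const_mul d₁
  have h2 : HasDerivAt (fun d : ℝ => 1 - d₁ / d) (-(d₁ * (-(x ^ 2)⁻¹))) x := h1.const_sub 1
  have h3 : HasDerivAt (fun d : ℝ => Real.exp (-d / p₁)) (Real.exp (-x / p₁) * (-1 / p₁)) x := by
    have := (((hasDerivAt_id x).neg).div_const p₁).exp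
    simpa using this
  have := ((hq.mul h3).sub (((h2.mul h3)).div_const p₁)).sub hq
  refine HasDerivAt.congr_deriv this ?_
  field_simp
  ring

private lemma aux_P2_nonneg (d₁ p₁ : ℝ) (hd₁ : 0 < d₁) (hp₁ : 0 < p₁) {x : ℝ} (hx : d₁ < x) :
    0 ≤ -2 * d₁ / x ^ 3 * Real.exp (-x / p₁) - 2 * d₁ / (x ^ 2 * p₁) * Real.exp (-x / p₁)
        + (1 - d₁ / x) * Real.exp (-x / p₁) / p₁ ^ 2 + 2 * d₁ / x ^ 3 := by
  have hx0 : 0 < x := hd₁.trans hx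
  set E := Real.exp (-x / p₁) with hE
  have hEpos : 0 < E := Real.exp_pos _
  have hkey : E * (2 * p₁ + x) ^ 2 ≤ 4 * p₁ ^ 2 := by
    have h1 : x / (2 * p₁) + 1 ≤ Real.exp (x / (2 * p₁)) := Real.add_one_le_exp _
    have h1' : (0:ℝ) ≤ x / (2 * p₁) + 1 := by positivity
    have h2 : (x / (2 * p₁) + 1) ^ 2 ≤ Real.exp (x / (2 * p₁)) ^ 2 := by
      exact pow_le_pow_left₀ h1' h1 2
    have h3 : Real.exp (x / (2 * p₁)) ^ 2 = Real.exp (x / p₁) := by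
      rw [← Real.exp_nat_mul]
      congr 1
      field_simp
      ring
    have h4 : E * Real.exp (x / p₁) = 1 := by
      rw [hE, ← Real.exp_add]
      simp [neg_div]
    have h5 : E * (x / (2 * p₁) + 1) ^ 2 ≤ 1 := by
      calc E * (x / (2 * p₁) + 1) ^ 2 ≤ E * Real.exp (x / p₁) := by
            apply mul_le_mul_of_nonneg_left _ hEpos.le
            rw [← h3]; exact h2
        _ = 1 := h4
    have h6 : (x / (2 * p₁) + 1) ^ 2 = (2 * p₁ + x) ^ 2 / (4 * p₁ ^ 2) := by
      field_simp
      ring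
    rw [h6] at h5
    have h7 : (0:ℝ) < 4 * p₁ ^ 2 := by positivity
    calc E * (2 * p₁ + x) ^ 2 = (E * ((2 * p₁ + x) ^ 2 / (4 * p₁ ^ 2))) * (4 * p₁ ^ 2) := by
          field_simp
      _ ≤ 1 * (4 * p₁ ^ 2) := by exact mul_le_mul_of_nonneg_right h5 h7.le
      _ = 4 * p₁ ^ 2 := by ring
  -- reduce to polynomial inequality: multiply by x^3 * p₁^2 > 0
  have hmain : 0 ≤ 2 * d₁ * p₁ ^ 2 * (1 - E) - 2 * d₁ * p₁ * x * E + x ^ 2 * (x - d₁) * E := by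
    rcases le_or_gt 0 (x ^ 3 - d₁ * x ^ 2 - 2 * d₁ * p₁ * x - 2 * d₁ * p₁ ^ 2) with hC | hC
    · nlinarith [mul_nonneg hEpos.le hC]
    · have hQ : (0:ℝ) < (2 * p₁ + x) ^ 2 := by positivity
      have h1 : 0 ≤ (4 * p₁ ^ 2 - E * (2 * p₁ + x) ^ 2)
          * (-(x ^ 3 - d₁ * x ^ 2 - 2 * d₁ * p₁ * x - 2 * d₁ * p₁ ^ 2)) :=
        mul_nonneg (sub_nonneg.mpr hkey) (by linarith)
      have h2 : 0 * ((2 * p₁ + x) ^ 2)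
          ≤ (2 * d₁ * p₁ ^ 2 * (1 - E) - 2 * d₁ * p₁ * x * E + x ^ 2 * (x - d₁) * E)
            * ((2 * p₁ + x) ^ 2) := by
        nlinarith [h1, mul_pos (mul_pos hp₁ hp₁)
          (mul_pos (mul_pos hx0 hx0) (by linarith : (0:ℝ) < 2 * x - d₁))]
      have := le_of_mul_le_mul_right h2 hQ
      linarith
  have expand : -2 * d₁ / x ^ 3 * E - 2 * d₁ / (x ^ 2 * p₁) * E + (1 - d₁ / x) * E / p₁ ^ 2 + 2 * d₁ / x ^ 3
      = (2 * d₁ * p₁ ^ 2 * (1 - E) - 2 * d₁ * p₁ * x * E + x ^ 2 * (x - d₁) * E) / (x ^ 3 * p₁ ^ 2) := by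
    field_simp
    ring
  rw [expand]
  exact div_nonneg hmain (by positivity)

theorem eta_concave_in_distance (h d₁ p₁ : ℝ) (hh1 : 20 ≤ h) (hh2 : h ≤ 120)
    (hd₁ : 0 < d₁) (hp₁ : 0 < p₁) :
    ConcaveOn ℝ (Set.Ioi d₁) (fun d : ℝ =>
      (4.32 - 0.76 * Real.logb 10 h) * (1 - ((1 - d₁ / d) * Real.exp (-d / p₁) + d₁ / d))
        + (2.225 - 0.05 * Real.logb 10 h) * ((1 - d₁ / d) * Real.exp (-d / p₁) + d₁ / d)) := by
  have h0 : (0:ℝ) < h := by linarith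
  have hlogb : Real.logb 10 h ≤ 59 / 20 := by
    have h1 : h ^ 20 ≤ 10 ^ 59 := by
      calc h ^ 20 ≤ 120 ^ 20 := by gcongr
        _ ≤ (10:ℝ) ^ 59 := by norm_num
    have h2 := (Real.logb_le_logb (by norm_num : (1:ℝ) < 10) (pow_pos h0 20)
      (by positivity)).mpr h1
    rw [Real.logb_pow, Real.logb_pow, Real.logb_self_eq_one (b := 10) (by norm_num)] at h2
    push_cast at h2
    linarith
  set c : ℝ := (2.225 - 0.05 * Real.logb 10 h) - (4.32 - 0.76 * Real.logb 10 h) with hcdef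
  have hc : c ≤ 0 := by rw [hcdef]; nlinarith [hlogb]
  set F1 : ℝ → ℝ := fun x => c *
    (d₁ / x ^ 2 * Real.exp (-x / p₁) - (1 - d₁ / x) * Real.exp (-x / p₁) / p₁ - d₁ / x ^ 2)
    with hF1def
  have hxne : ∀ x : ℝ, x ∈ Set.Ioi d₁ → x ≠ 0 := fun x hx => ne_of_gt (hd₁.trans hx)
  have hderiv : ∀ x ∈ Set.Ioi d₁, HasDerivAt (fun d : ℝ =>
      (4.32 - 0.76 * Real.logb 10 h) * (1 - ((1 - d₁ / d) * Real.exp (-d / p₁) + d₁ / d))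
        + (2.225 - 0.05 * Real.logb 10 h) * ((1 - d₁ / d) * Real.exp (-d / p₁) + d₁ / d))
      (F1 x) x := by
    intro x hx
    have hP := aux_P_deriv d₁ p₁ hp₁ (hxne x hx)
    have := ((hP.const_sub 1).const_mul (4.32 - 0.76 * Real.logb 10 h)).add
      (hP.const_mul (2.225 - 0.05 * Real.logb 10 h))
    refine HasDerivAt.congr_deriv this ?_
    rw [hF1def, hcdef]
    ring
  have hF1d : ∀ x ∈ Set.Ioi d₁, HasDerivAt F1
      (c * (-2 * d₁ / x ^ 3 * Real.exp (-x / p₁) - 2 * d₁ / (x ^ 2 * p₁) * Real.exp (-x / p₁)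
        + (1 - d₁ / x) * Real.exp (-x / p₁) / p₁ ^ 2 + 2 * d₁ / x ^ 3)) x := by
    intro x hx
    exact (aux_P1_deriv d₁ p₁ hp₁ (hxne x hx)).const_mul c
  have hev : ∀ x ∈ Set.Ioi d₁, (deriv (fun d : ℝ =>
      (4.32 - 0.76 * Real.logb 10 h) * (1 - ((1 - d₁ / d) * Real.exp (-d / p₁) + d₁ / d))
        + (2.225 - 0.05 * Real.logb 10 h) * ((1 - d₁ / d) * Real.exp (-d / p₁) + d₁ / d)))
      =ᶠ[nhds x] F1 := by
    intro x hx
    exact Filter.eventuallyEq_of_mem (isOpen_Ioi.mem_nhds hx)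
      (fun y hy => (hderiv y hy).deriv)
  apply concaveOn_of_deriv2_nonpos (convex_Ioi d₁)
  · exact fun x hx => (hderiv x hx).continuousAt.continuousWithinAt
  · intro x hx
    rw [interior_Ioi] at hx
    exact (hderiv x hx).differentiableAt.differentiableWithinAt
  · intro x hx
    rw [interior_Ioi] at hx
    exact (((hev x hx).differentiableAt_iff).mpr
      (hF1d x hx).differentiableAt).differentiableWithinAt
  · intro x hx
    rw [interior_Ioi] at hx
    have e1 : deriv^[2] (fun d : ℝ =>
      (4.32 - 0.76 * Real.logb 10 h) * (1 - ((1 - d₁ / d) * Real.exp (-d / p₁) + d₁ / d))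
        + (2.225 - 0.05 * Real.logb 10 h) * ((1 - d₁ / d) * Real.exp (-d / p₁) + d₁ / d)) x
        = deriv F1 x := by
      rw [Function.iterate_succ, Function.iterate_one, Function.comp_apply]
      exact (hev x hx).deriv_eq
    rw [e1, (hF1d x hx).deriv]
    exact mul_nonpos_iff.mpr (Or.inr ⟨hc, aux_P2_nonneg d₁ p₁ hd₁ hp₁ hx⟩)
end
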